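/- In ℝ², let θ ∈ (arccos(1/√2), arccos(1/√(2n))], α = 1/(2n cos θ), R_θ the rotation by θ. Then: (a) αR_θ and αR_{-θ} are firmly nonexpansive; (b) nαR_θ and nαR_{-θ} are not firmly nonexpansive; (c) nαR_θ + nαR_{-θ} = Id. -/

import Mathlib

noncomputable section

/-- Counterclockwise rotation by `θ` in `ℝ²`. -/
def Rot (θ : ℝ) (x : Fin 2 → ℝ) : Fin 2 → ℝ :=
  ![Real.cos θ * x 0 - Real.sin θ * x 1, Real.sin θ * x 0 + Real.cos θ * x 1]

/-- Squared Euclidean norm on `ℝ²`. -/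
def ns (x : Fin 2 → ℝ) : ℝ := x 0 ^ 2 + x 1 ^ 2

/-- `T : ℝ² → ℝ²` is firmly nonexpansive. -/
def FNE (T : (Fin 2 → ℝ) → Fin 2 → ℝ) : Prop :=
  ∀ x y : Fin 2 → ℝ, ns (T x - T y) + ns ((x - T x) - (y - T y)) ≤ ns (x - y)

lemma fne_aux (a c s : ℝ) (hcs : c ^ 2 + s ^ 2 = 1) (ha : 0 ≤ a) (hac : a ≤ c) :
    FNE (fun x => a • ![c * x 0 - s * x 1, s * x 0 + c * x 1]) := by
  intro x y
  simp only [ns, Pi.sub_apply, Pi.smul_apply, smul_eq_mul,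
    Matrix.cons_val_zero, Matrix.cons_val_one, Matrix.head_cons]
  nlinarith [mul_nonneg (mul_nonneg (sub_nonneg.2 hac) ha)
      (add_nonneg (sq_nonneg (x 0 - y 0)) (sq_nonneg (x 1 - y 1))),
    hcs, mul_nonneg (mul_nonneg ha ha)
      (add_nonneg (sq_nonneg (x 0 - y 0)) (sq_nonneg (x 1 - y 1))),
    sq_nonneg (x 0 - y 0), sq_nonneg (x 1 - y 1)]

lemma not_fne_aux (b c s : ℝ) (hcs : c ^ 2 + s ^ 2 = 1) (hb : 0 < b) (hcb : c < b) :
    ¬ FNE (fun x => b • ![c * x 0 - s * x 1, s * x 0 + c * x 1]) := by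
  intro h
  have h1 := h ![1, 0] 0
  simp only [ns, Pi.sub_apply, Pi.smul_apply, smul_eq_mul, Pi.zero_apply,
    Matrix.cons_val_zero, Matrix.cons_val_one, Matrix.head_cons,
    Pi.neg_apply, mul_zero, mul_one, sub_zero, zero_sub, add_zero, zero_add, sub_self,
    neg_zero, neg_neg] at h1
  nlinarith [h1, hcs, mul_pos hb (sub_pos.2 hcb), sq_nonneg b, mul_pos hb hb]

theorem scaled_rotations (n : ℕ) (hn : 2 ≤ n) (θ : ℝ)
    (hθ1 : Real.arccos (1 / Real.sqrt 2) < θ)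
    (hθ2 : θ ≤ Real.arccos (1 / Real.sqrt (2 * n))) :
    FNE (fun x => (1 / (2 * (n : ℝ) * Real.cos θ)) • Rot θ x) ∧
    FNE (fun x => (1 / (2 * (n : ℝ) * Real.cos θ)) • Rot (-θ) x) ∧
    ¬ FNE (fun x => ((n : ℝ) * (1 / (2 * (n : ℝ) * Real.cos θ))) • Rot θ x) ∧
    ¬ FNE (fun x => ((n : ℝ) * (1 / (2 * (n : ℝ) * Real.cos θ))) • Rot (-θ) x) ∧
    ∀ x : Fin 2 → ℝ,
      ((n : ℝ) * (1 / (2 * (n : ℝ) * Real.cos θ))) • Rot θ x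
        + ((n : ℝ) * (1 / (2 * (n : ℝ) * Real.cos θ))) • Rot (-θ) x = x := by
  have hn2 : (2:ℝ) ≤ (n:ℝ) := by exact_mod_cast hn
  have hnpos : (0:ℝ) < n := by linarith
  have h2n : (0:ℝ) < 2 * n := by linarith
  have hθpos : 0 < θ := lt_of_le_of_lt (Real.arccos_nonneg _) hθ1
  have hθpi : θ ≤ Real.pi := hθ2.trans (Real.arccos_le_pi _)
  have hsqrt2 : (1:ℝ) ≤ Real.sqrt 2 := by
    rw [show (1:ℝ) = Real.sqrt 1 by simp]
    exact Real.sqrt_le_sqrt (by norm_num)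
  have hsqrt2n : (1:ℝ) ≤ Real.sqrt (2 * n) := by
    rw [show (1:ℝ) = Real.sqrt 1 by simp]
    exact Real.sqrt_le_sqrt (by linarith)
  have hm1 : (-1:ℝ) ≤ 0 := by norm_num
  have hc1 : Real.cos θ < 1 / Real.sqrt 2 := by
    have h := Real.cos_lt_cos_of_nonneg_of_le_pi (Real.arccos_nonneg _) hθpi hθ1
    rwa [Real.cos_arccos (hm1.trans (by positivity)) (by
      rw [div_le_one (by positivity)]; exact hsqrt2)] at h
  have hc2 : 1 / Real.sqrt (2 * n) ≤ Real.cos θ := by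
    have h := Real.cos_le_cos_of_nonneg_of_le_pi hθpos.le (Real.arccos_le_pi _) hθ2
    rwa [Real.cos_arccos (hm1.trans (by positivity)) (by
      rw [div_le_one (by positivity)]; exact hsqrt2n)] at h
  have hcpos : 0 < Real.cos θ := lt_of_lt_of_le (by positivity) hc2
  have hkey : 1 ≤ 2 * (n:ℝ) * Real.cos θ ^ 2 := by
    have h := mul_le_mul hc2 hc2 (by positivity) hcpos.le
    rw [div_mul_div_comm, Real.mul_self_sqrt h2n.le, one_mul] at h
    rw [div_le_iff₀ h2n] at h
    nlinarith
  have hc2lt : 2 * Real.cos θ ^ 2 < 1 := by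
    have h := mul_lt_mul'' hc1 hc1 hcpos.le hcpos.le
    rw [div_mul_div_comm, Real.mul_self_sqrt (by norm_num), one_mul] at h
    rw [lt_div_iff₀ (by norm_num)] at h
    nlinarith
  have hapos : 0 < 1 / (2 * (n:ℝ) * Real.cos θ) := by positivity
  have hac : 1 / (2 * (n:ℝ) * Real.cos θ) ≤ Real.cos θ := by
    rw [div_le_iff₀ (by positivity)]
    nlinarith
  have hbval : (n:ℝ) * (1 / (2 * (n:ℝ) * Real.cos θ)) = 1 / (2 * Real.cos θ) := by
    field_simp
  have hbpos : 0 < (n:ℝ) * (1 / (2 * (n:ℝ) * Real.cos θ)) := by positivity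
  have hcb : Real.cos θ < (n:ℝ) * (1 / (2 * (n:ℝ) * Real.cos θ)) := by
    rw [hbval, lt_div_iff₀ (by positivity)]
    nlinarith
  have hcsp : Real.cos θ ^ 2 + Real.sin θ ^ 2 = 1 := Real.cos_sq_add_sin_sq θ
  have hcsn : Real.cos (-θ) ^ 2 + Real.sin (-θ) ^ 2 = 1 := Real.cos_sq_add_sin_sq (-θ)
  have hacn : 1 / (2 * (n:ℝ) * Real.cos θ) ≤ Real.cos (-θ) := by
    rwa [Real.cos_neg]
  have hcbn : Real.cos (-θ) < (n:ℝ) * (1 / (2 * (n:ℝ) * Real.cos θ)) := by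
    rwa [Real.cos_neg]
  refine ⟨fne_aux _ _ _ hcsp hapos.le hac, fne_aux _ _ _ hcsn hapos.le hacn,
    not_fne_aux _ _ _ hcsp hbpos hcb, not_fne_aux _ _ _ hcsn hbpos hcbn, ?_⟩
  intro x
  funext i
  fin_cases i <;>
    simp only [Pi.add_apply, Pi.smul_apply, smul_eq_mul, Rot,
      Matrix.cons_val_zero, Matrix.cons_val_one, Matrix.head_cons,
      Real.cos_neg, Real.sin_neg, hbval, Fin.isValue, Fin.zero_eta, Fin.mk_one] <;>
    field_simp <;> ring
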